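/- Let k and q be positive integers with k > q, and let G be a finite graph on a subset of Z with chromatic number at least k. Then G contains at least binom(k-q+1, 2) edges (u,v) with v - u ≥ q. -/

import Mathlib

open Finset

open scoped Classical in
lemma key5 (q : ℕ) (hq : 1 ≤ q) (V : Finset ℤ) :
    ∀ (d : ℕ), 1 ≤ d → ∀ G : SimpleGraph ℤ,
    (∀ u v : ℤ, G.Adj u v → u ∈ V ∧ v ∈ V) →
    ((V ×ˢ V).filter (fun p => p.1 < p.2 ∧ G.Adj p.1 p.2 ∧ (q:ℤ) ≤ p.2 - p.1)).card
      < (d+1).choose 2 →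
    ∃ c : ℤ → ℕ, (∀ x, c x < q - 1 + d) ∧ ∀ u v, G.Adj u v → c u ≠ c v := by
  induction V using Finset.strongInduction with
  | _ V IH =>
  intro d hd G hVG hL
  rcases V.eq_empty_or_nonempty with rfl | hne
  · refine ⟨fun _ => 0, fun x => ?_, fun u v h => absurd (hVG u v h).1 (by simp)⟩
    show 0 < q - 1 + d
    omega
  set v := V.max' hne with hv
  have hvV : v ∈ V := V.max'_mem hne
  have hmax : ∀ u ∈ V, u ≤ v := fun u hu => V.le_max' u hu
  set L := (V ×ˢ V).filter
    (fun p => p.1 < p.2 ∧ G.Adj p.1 p.2 ∧ (q:ℤ) ≤ p.2 - p.1) with hLdef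
  set G' : SimpleGraph ℤ :=
    { Adj := fun a b => G.Adj a b ∧ a ≠ v ∧ b ≠ v
      symm := ⟨fun a b h => ⟨h.1.symm, h.2.2, h.2.1⟩⟩
      loopless := ⟨fun a h => G.loopless.irrefl a h.1⟩ } with hG'
  have hG'adj : ∀ a b : ℤ, G'.Adj a b ↔ G.Adj a b ∧ a ≠ v ∧ b ≠ v := fun a b => Iff.rfl
  letI : DecidableRel G'.Adj := fun a b => Classical.propDecidable _
  have hVG' : ∀ u w : ℤ, G'.Adj u w → u ∈ V.erase v ∧ w ∈ V.erase v := by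
    intro u w h
    exact ⟨Finset.mem_erase.2 ⟨h.2.1, (hVG u w h.1).1⟩,
      Finset.mem_erase.2 ⟨h.2.2, (hVG u w h.1).2⟩⟩
  set L' := ((V.erase v) ×ˢ (V.erase v)).filter
    (fun p => p.1 < p.2 ∧ G'.Adj p.1 p.2 ∧ (q:ℤ) ≤ p.2 - p.1) with hL'def
  set B := V.filter (fun u => G.Adj u v ∧ (q:ℤ) ≤ v - u) with hBdef
  have hBsub : B.image (fun u => (u, v)) ⊆ L := by
    intro p hp
    simp only [Finset.mem_image] at hp
    obtain ⟨u, hu, rfl⟩ := hp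
    simp only [hLdef, Finset.mem_filter, hBdef] at hu ⊢
    refine ⟨Finset.mem_product.2 ⟨hu.1, hvV⟩, by omega, hu.2.1, hu.2.2⟩
  have hL'sub : L' ⊆ L := by
    intro p hp
    simp only [hL'def, hLdef, Finset.mem_filter, Finset.mem_product,
      Finset.mem_erase] at hp ⊢
    exact ⟨⟨hp.1.1.2, hp.1.2.2⟩, hp.2.1, hp.2.2.1.1, hp.2.2.2⟩
  have hdisj : Disjoint L' (B.image (fun u => (u, v))) := by
    rw [Finset.disjoint_right]
    intro p hp hp'
    simp only [Finset.mem_image] at hp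
    obtain ⟨u, hu, rfl⟩ := hp
    simp only [hL'def, Finset.mem_filter, Finset.mem_product, Finset.mem_erase] at hp'
    exact hp'.1.2.1 rfl
  have hBim : (B.image (fun u => (u, v))).card = B.card :=
    Finset.card_image_of_injective _ (fun a b h => (Prod.mk.injEq _ _ _ _ ▸ h : _ ∧ _).1)
  have hcards : L'.card + B.card ≤ L.card := by
    rw [← hBim, ← Finset.card_union_of_disjoint hdisj]
    exact Finset.card_le_card (Finset.union_subset hL'sub hBsub)
  have hchoose : (d+1).choose 2 = d.choose 2 + d := by
    rw [Nat.choose_succ_succ, Nat.choose_one_right, Nat.add_comm]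
  by_cases hB : d ≤ B.card
  · -- many long edges at v: remove v, use a fresh color
    have hBL : B.card ≤ L.card := hBim ▸ Finset.card_le_card hBsub
    have hd2 : 2 ≤ d := by
      by_contra h
      have hd1 : d = 1 := by omega
      subst hd1
      have hc : (1 + 1).choose 2 = 1 := by decide
      rw [hc] at hL
      omega
    have hL'lt : L'.card < (d - 1 + 1).choose 2 := by
      have h1 : d - 1 + 1 = d := by omega
      rw [h1]
      omega
    rw [hL'def] at hL'lt
    obtain ⟨c', hc'b, hc'p⟩ := IH (V.erase v) (Finset.erase_ssubset hvV)
      (d - 1) (by omega) G' hVG' hL'lt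
    refine ⟨Function.update c' v (q - 1 + (d - 1)), ?_, ?_⟩
    · intro x
      by_cases hx : x = v
      · subst hx; rw [Function.update_self]; omega
      · rw [Function.update_of_ne hx]; have := hc'b x; omega
    · intro a b hab
      by_cases ha : a = v <;> by_cases hb : b = v
      · subst ha; subst hb; exact absurd rfl hab.ne
      · subst ha
        rw [Function.update_self, Function.update_of_ne hb]
        have := hc'b b; omega
      · subst hb
        rw [Function.update_self, Function.update_of_ne ha]
        have := hc'b a; omega
      · rw [Function.update_of_ne ha, Function.update_of_ne hb]
        exact hc'p a b ⟨hab, ha, hb⟩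
  · -- few long edges at v: remove v, pick an unused color among neighbors
    push_neg at hB
    have hL'lt : L'.card < (d+1).choose 2 :=
      lt_of_le_of_lt (Finset.card_le_card hL'sub) hL
    rw [hL'def] at hL'lt
    obtain ⟨c', hc'b, hc'p⟩ := IH (V.erase v) (Finset.erase_ssubset hvV)
      d hd G' hVG' hL'lt
    set N := V.filter (fun u => G.Adj u v) with hNdef
    have hNsub : N ⊆ B ∪ Finset.Ioo (v - q) v := by
      intro u hu
      simp only [hNdef, Finset.mem_filter] at hu
      by_cases hlong : (q:ℤ) ≤ v - u
      · exact Finset.mem_union_left _ (Finset.mem_filter.2 ⟨hu.1, hu.2, hlong⟩)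
      · refine Finset.mem_union_right _ (Finset.mem_Ioo.2 ⟨by omega, ?_⟩)
        have h1 := hmax u hu.1
        have h2 : u ≠ v := hu.2.ne
        omega
    have hIoo : (Finset.Ioo (v - q) v).card = q - 1 := by
      rw [Int.card_Ioo]
      omega
    have hNcard : N.card ≤ (d - 1) + (q - 1) := by
      calc N.card ≤ (B ∪ Finset.Ioo (v - q) v).card := Finset.card_le_card hNsub
        _ ≤ B.card + (Finset.Ioo (v - q) v).card := Finset.card_union_le _ _
        _ ≤ (d - 1) + (q - 1) := by rw [hIoo]; omega
    set F := N.image c' with hFdef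
    have hFcard : F.card < q - 1 + d := by
      have h2 : F.card ≤ N.card := by
        rw [hFdef]; exact Finset.card_image_le
      omega
    have hsd : (Finset.range (q - 1 + d) \ F).Nonempty := by
      rw [← Finset.card_pos]
      have h1 := Finset.le_card_sdiff F (Finset.range (q - 1 + d))
      rw [Finset.card_range] at h1
      omega
    obtain ⟨m, hm⟩ := hsd
    rw [Finset.mem_sdiff, Finset.mem_range] at hm
    have hmF : ∀ u ∈ N, c' u ≠ m := by
      intro u hu h
      exact hm.2 (Finset.mem_image.2 ⟨u, hu, h⟩)
    refine ⟨Function.update c' v m, ?_, ?_⟩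
    · intro x
      by_cases hx : x = v
      · subst hx; rw [Function.update_self]; exact hm.1
      · rw [Function.update_of_ne hx]; exact hc'b x
    · intro a b hab
      by_cases ha : a = v <;> by_cases hb : b = v
      · subst ha; subst hb; exact absurd rfl hab.ne
      · subst ha
        rw [Function.update_self, Function.update_of_ne hb]
        exact fun h => hmF b (Finset.mem_filter.2 ⟨(hVG _ _ hab).2, hab.symm⟩) h.symm
      · subst hb
        rw [Function.update_self, Function.update_of_ne ha]
        exact hmF a (Finset.mem_filter.2 ⟨(hVG _ _ hab).1, hab⟩)
      · rw [Function.update_of_ne ha, Function.update_of_ne hb]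
        exact hc'p a b ⟨hab, ha, hb⟩

/-- If `k > q ≥ 1` and `G` is a finite graph on a subset of `ℤ` with chromatic
number at least `k`, then `G` contains at least `binom (k-q+1) 2` edges of
length at least `q`. -/
theorem stmt5 (k q : ℕ) (hq : 1 ≤ q) (hkq : q < k)
    (G : SimpleGraph ℤ) (hfin : G.edgeSet.Finite)
    (hchi : (k : ℕ∞) ≤ G.chromaticNumber) :
    ∃ S : Finset (ℤ × ℤ), (k - q + 1).choose 2 ≤ S.card ∧
      ∀ e ∈ S, e.1 < e.2 ∧ G.Adj e.1 e.2 ∧ (q : ℤ) ≤ e.2 - e.1 := by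
  classical
  set P1 : Set (ℤ × ℤ) := {p | p.1 < p.2 ∧ G.Adj p.1 p.2} with hP1def
  have hinj : Set.InjOn (fun p : ℤ × ℤ => s(p.1, p.2)) P1 := by
    rintro ⟨a, b⟩ ⟨h1, _⟩ ⟨c, e⟩ ⟨h2, _⟩ h
    simp only [Sym2.eq_iff] at h
    rcases h with ⟨rfl, rfl⟩ | ⟨rfl, rfl⟩
    · rfl
    · simp only [Prod.mk.injEq]; omega
  have himg : ((fun p : ℤ × ℤ => s(p.1, p.2)) '' P1).Finite := by
    apply hfin.subset
    rintro _ ⟨⟨a, b⟩, ⟨_, h2⟩, rfl⟩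
    exact h2
  have hP1 : P1.Finite := Set.Finite.of_finite_image himg hinj
  set S0 := hP1.toFinset with hS0def
  have hS0mem : ∀ p : ℤ × ℤ, p ∈ S0 ↔ p.1 < p.2 ∧ G.Adj p.1 p.2 := by
    intro p; rw [hS0def, Set.Finite.mem_toFinset]; rfl
  set V := S0.image Prod.fst ∪ S0.image Prod.snd with hVdef
  have hVG : ∀ u v : ℤ, G.Adj u v → u ∈ V ∧ v ∈ V := by
    intro u v h
    rcases lt_trichotomy u v with hlt | heq | hgt
    · have hm : (u, v) ∈ S0 := (hS0mem _).2 ⟨hlt, h⟩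
      exact ⟨Finset.mem_union_left _ (Finset.mem_image.2 ⟨_, hm, rfl⟩),
        Finset.mem_union_right _ (Finset.mem_image.2 ⟨_, hm, rfl⟩)⟩
    · exact absurd heq h.ne
    · have hm : (v, u) ∈ S0 := (hS0mem _).2 ⟨hgt, h.symm⟩
      exact ⟨Finset.mem_union_right _ (Finset.mem_image.2 ⟨_, hm, rfl⟩),
        Finset.mem_union_left _ (Finset.mem_image.2 ⟨_, hm, rfl⟩)⟩
  set S := S0.filter (fun p => (q:ℤ) ≤ p.2 - p.1) with hSdef
  refine ⟨S, ?_, ?_⟩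
  · by_contra hlt
    push_neg at hlt
    set d := k - q with hddef
    have hSL : S = (V ×ˢ V).filter
        (fun p => p.1 < p.2 ∧ G.Adj p.1 p.2 ∧ (q:ℤ) ≤ p.2 - p.1) := by
      ext ⟨a, b⟩
      simp only [hSdef, Finset.mem_filter, hS0mem, Finset.mem_product]
      constructor
      · rintro ⟨⟨h1, h2⟩, h3⟩
        exact ⟨⟨(hVG a b h2).1, (hVG a b h2).2⟩, h1, h2, h3⟩
      · rintro ⟨_, h1, h2, h3⟩
        exact ⟨⟨h1, h2⟩, h3⟩
    have hcard : ((V ×ˢ V).filter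
        (fun p => p.1 < p.2 ∧ G.Adj p.1 p.2 ∧ (q:ℤ) ≤ p.2 - p.1)).card
        < (d + 1).choose 2 := by
      rw [← hSL]
      have : d + 1 = k - q + 1 := rfl
      omega
    obtain ⟨c, hcb, hcp⟩ := key5 q hq V d (by omega) G hVG hcard
    have hcol : G.Colorable (q - 1 + d) :=
      ⟨SimpleGraph.Coloring.mk (fun x => ⟨c x, hcb x⟩) (fun {a b} h => by
        simp only [Ne, Fin.mk.injEq]
        exact hcp a b h)⟩
    have hle := hcol.chromaticNumber_le
    have hk : (k : ℕ∞) ≤ ((q - 1 + d : ℕ) : ℕ∞) := le_trans hchi hle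
    have hk' : k ≤ q - 1 + d := by exact_mod_cast hk
    omega
  · intro e he
    rw [hSdef, Finset.mem_filter] at he
    obtain ⟨h1, h2⟩ := he
    rw [hS0mem] at h1
    exact ⟨h1.1, h1.2, h2⟩
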